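/- Let y : ℕ_0 → ℝ with y(0) ≥ 0, fix ν ∈ (0,1), and suppose Δ_0^ν y(t) ≥ 0 for each t ∈ ℕ_{1−ν}. Then y is ν-increasing on ℕ_0, i.e., y(a+1) ≥ ν y(a) for all a ∈ ℕ_0. -/

import Mathlib

/-- Falling factorial `t^(α) = Γ(t+1)/Γ(t+1-α)`. -/
noncomputable def fallingFactorial (t α : ℝ) : ℝ := Real.Gamma (t + 1) / Real.Gamma (t + 1 - α)

/-- The delta left fractional sum `Δ_0^{-β} y` at the grid point `β + k`. -/
noncomputable def deltaSum (a : ℤ) (β : ℝ) (f : ℤ → ℝ) (k : ℕ) : ℝ :=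
  (1 / Real.Gamma β) *
    ∑ j ∈ Finset.range (k + 1), fallingFactorial (β + (k : ℝ) - (j : ℝ) - 1) (β - 1) * f (a + j)

noncomputable def gcoef (β : ℝ) (k j : ℕ) : ℝ :=
  Real.Gamma (β + (k : ℝ) - j) / Real.Gamma ((k : ℝ) - j + 1)

lemma ff_eq_g (β : ℝ) (k j : ℕ) :
    fallingFactorial (β + (k : ℝ) - (j : ℝ) - 1) (β - 1) = gcoef β k j := by
  unfold fallingFactorial gcoef
  congr 1 <;> ring_nf

lemma g_pos {β : ℝ} (hβ : 0 < β) {k j : ℕ} (hj : j ≤ k) : 0 < gcoef β k j := by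
  have hjk : (j : ℝ) ≤ k := by exact_mod_cast hj
  apply div_pos <;> apply Real.Gamma_pos_of_pos <;> linarith

lemma g_diag (β : ℝ) (k : ℕ) : gcoef β k k = Real.Gamma β := by
  unfold gcoef
  simp [Real.Gamma_one]

lemma g_succ {β : ℝ} (hβ : 0 < β) {k j : ℕ} (hj : j ≤ k) :
    gcoef β (k + 1) j = (β + k - j) / ((k : ℝ) - j + 1) * gcoef β k j := by
  have hjk : (j : ℝ) ≤ k := by exact_mod_cast hj
  have h1 : (β + (k : ℝ) - j) ≠ 0 := by linarith
  have h2 : ((k : ℝ) - j + 1 - 1) ≠ 0 ∨ True := Or.inr trivial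
  have e1 : Real.Gamma (β + ((k : ℕ) + 1 : ℝ) - j) = (β + k - j) * Real.Gamma (β + k - j) := by
    have := Real.Gamma_add_one h1
    rw [show (β + ((k : ℕ) + 1 : ℝ) - j) = (β + (k:ℝ) - j) + 1 by ring, this]
  have h3 : ((k : ℝ) - j + 1) ≠ 0 := by linarith
  have e2 : Real.Gamma (((k : ℕ) + 1 : ℝ) - j + 1) = ((k : ℝ) - j + 1) * Real.Gamma ((k : ℝ) - j + 1) := by
    have := Real.Gamma_add_one h3
    rw [show (((k : ℕ) + 1 : ℝ) - j + 1) = ((k:ℝ) - j + 1) + 1 by ring, this]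
  unfold gcoef
  push_cast
  rw [show (β + ((k : ℝ) + 1) - j) = β + ((k : ℕ) + 1 : ℝ) - j by push_cast; ring,
      show ((k : ℝ) + 1 - j + 1) = ((k : ℕ) + 1 : ℝ) - j + 1 by push_cast; ring, e1, e2]
  have hg : Real.Gamma ((k : ℝ) - j + 1) ≠ 0 :=
    ne_of_gt (Real.Gamma_pos_of_pos (by linarith))
  field_simp

lemma g_diff {β : ℝ} (hβ : 0 < β) {k j : ℕ} (hj : j ≤ k) :
    gcoef β k j - gcoef β (k + 1) j = (1 - β) / ((k : ℝ) - j + 1) * gcoef β k j := by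
  have hjk : (j : ℝ) ≤ k := by exact_mod_cast hj
  have h3 : ((k : ℝ) - j + 1) ≠ 0 := by linarith
  rw [g_succ hβ hj]
  field_simp
  ring

theorem delta_nu_increasing (ν : ℝ) (hν : ν ∈ Set.Ioo (0 : ℝ) 1) (y : ℤ → ℝ)
    (hy0 : y 0 ≥ 0)
    (h : ∀ k : ℕ, deltaSum 0 (1 - ν) y (k + 1) - deltaSum 0 (1 - ν) y k ≥ 0) :
    ∀ a : ℤ, 0 ≤ a → y (a + 1) ≥ ν * y a := by
  obtain ⟨hν0, hν1⟩ := hν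
  set β : ℝ := 1 - ν with hβdef
  have hβ : 0 < β := by simp [hβdef]; linarith
  have hΓβ : 0 < Real.Gamma β := Real.Gamma_pos_of_pos hβ
  -- rewrite deltaSum as (1/Γβ) * sum of gcoef terms
  have hds : ∀ k : ℕ, deltaSum 0 β y k =
      (1 / Real.Gamma β) * ∑ j ∈ Finset.range (k + 1), gcoef β k j * y j := by
    intro k
    unfold deltaSum
    congr 1
    apply Finset.sum_congr rfl
    intro j _
    rw [ff_eq_g]
    norm_num
  -- main step
  have step : ∀ k : ℕ, (∀ j : ℕ, j ≤ k → 0 ≤ y j) → y ((k : ℤ) + 1) ≥ ν * y k := by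
    intro k hnn
    have hk := h k
    rw [hds, hds] at hk
    have hinv : Real.Gamma β * (1 / Real.Gamma β) = 1 := by field_simp
    have hsum : ∑ j ∈ Finset.range (k + 1 + 1), gcoef β (k + 1) j * y j
        ≥ ∑ j ∈ Finset.range (k + 1), gcoef β k j * y j := by
      have h2 : (0:ℝ) ≤ Real.Gamma β *
          ((1 / Real.Gamma β) * ∑ j ∈ Finset.range (k + 1 + 1), gcoef β (k + 1) j * y j
            - (1 / Real.Gamma β) * ∑ j ∈ Finset.range (k + 1), gcoef β k j * y j) :=
        mul_nonneg hΓβ.le hk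
      rw [mul_sub, ← mul_assoc, ← mul_assoc, hinv, one_mul, one_mul] at h2
      linarith
    rw [Finset.sum_range_succ (fun j => gcoef β (k + 1) j * y j) (k + 1)] at hsum
    rw [g_diag] at hsum
    have key : Real.Gamma β * y ((k : ℕ) + 1 : ℤ)
        ≥ ∑ j ∈ Finset.range (k + 1), (gcoef β k j - gcoef β (k + 1) j) * y j := by
      have : ∑ j ∈ Finset.range (k + 1), (gcoef β k j - gcoef β (k + 1) j) * y j
          = ∑ j ∈ Finset.range (k + 1), gcoef β k j * y j
            - ∑ j ∈ Finset.range (k + 1), gcoef β (k + 1) j * y j := by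
        rw [← Finset.sum_sub_distrib]; apply Finset.sum_congr rfl; intros; ring
      rw [this]
      push_cast at hsum ⊢
      linarith [hsum]
    -- split off j = k term
    rw [Finset.sum_range_succ] at key
    have hrest : 0 ≤ ∑ j ∈ Finset.range k, (gcoef β k j - gcoef β (k + 1) j) * y j := by
      apply Finset.sum_nonneg
      intro j hj
      have hjk : j ≤ k := le_of_lt (Finset.mem_range.mp hj)
      have hjk' : (j : ℝ) ≤ k := by exact_mod_cast hjk
      rw [g_diff hβ hjk]
      apply mul_nonneg
      apply mul_nonneg
      · apply div_nonneg (by linarith) (by linarith)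
      · exact le_of_lt (g_pos hβ hjk)
      · exact hnn j hjk
    have hdiag : gcoef β k k - gcoef β (k + 1) k = (1 - β) * Real.Gamma β := by
      rw [g_diff hβ (le_refl k), g_diag]
      field_simp
      ring
    rw [hdiag] at key
    have hν' : (1 - β) = ν := by simp [hβdef]
    rw [hν'] at key
    have : Real.Gamma β * y ((k : ℕ) + 1 : ℤ) ≥ ν * Real.Gamma β * y k := by
      nlinarith [key, hrest]
    have h4 : Real.Gamma β * (ν * y (k : ℤ)) ≤ Real.Gamma β * y ((k : ℤ) + 1) := by
      rw [show Real.Gamma β * (ν * y (k : ℤ)) = ν * Real.Gamma β * y (k : ℤ) from by ring]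
      exact this
    exact (mul_le_mul_iff_right₀ hΓβ).mp h4
  -- induction: nonnegativity
  have nn : ∀ k : ℕ, ∀ j : ℕ, j ≤ k → 0 ≤ y j := by
    intro k
    induction k with
    | zero => intro j hj; interval_cases j; simpa using hy0
    | succ n ih =>
      intro j hj
      rcases Nat.lt_succ_iff_lt_or_eq.mp (Nat.lt_succ_of_le hj) with hl | he
      · exact ih j (Nat.lt_succ_iff.mp hl)
      · subst he
        have := step n ih
        have hyn : 0 ≤ y n := ih n le_rfl
        push_cast
        nlinarith
  intro a ha
  lift a to ℕ using ha
  have := step a (nn a)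
  exact_mod_cast this
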